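/- In any triangle ABC with angles A, B, C, circumradius R, and inradius r, tan(A/2) + tan(B/2) + tan(C/2) ≥ √(3 + 4(R − 2r)/(4R + r)). -/

import Mathlib

-- Schur's inequality (degree 1), in the form we need.
lemma schur_aux (x y z : ℝ) (hx : 0 ≤ x) (hy : 0 ≤ y) (hz : 0 ≤ z) :
    4*(x+y+z)*(x*y+y*z+z*x) ≤ (x+y+z)^3 + 9*(x*y*z) := by
  rcases le_total x y with h1 | h1 <;> rcases le_total y z with h2 | h2 <;>
    rcases le_total x z with h3 | h3 <;>
  nlinarith [mul_nonneg hx hy, mul_nonneg hy hz, mul_nonneg hx hz,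
    sq_nonneg (x-y), sq_nonneg (y-z), sq_nonneg (x-z),
    mul_nonneg (mul_nonneg hx hy) hz,
    mul_nonneg hx (sq_nonneg (y-z)), mul_nonneg hy (sq_nonneg (x-z)),
    mul_nonneg hz (sq_nonneg (x-y))]


lemma final_aux (u v w P R r : ℝ) (hu : 0 < u) (hv : 0 < v) (hw : 0 < w)
    (hP : 0 < P) (hR : 0 < R)
    (h1 : u * v + v * w + w * u = 1)
    (h3 : ((u + v + w) - u * v * w) * P = 1)
    (hr : r = 4 * R * (u * v * w * P)) :
    Real.sqrt (3 + 4 * (R - 2 * r) / (4 * R + r)) ≤ u + v + w := by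
  set s := u + v + w with hs_def
  set p := u * v * w with hp_def
  have hs : 0 < s := by rw [hs_def]; positivity
  have hpp : 0 < p := by rw [hp_def]; positivity
  have hschur : 4 * s ≤ s ^ 3 + 9 * p := by
    have := schur_aux u v w hu.le hv.le hw.le
    rw [h1] at this
    rw [hs_def, hp_def]; linarith
  clear_value s p
  have hcore : 16 - 20 * (p * P) ≤ s ^ 2 * (4 + 4 * (p * P)) := by
    have t1 : 0 ≤ P * (s ^ 3 + 9 * p - 4 * s) := mul_nonneg hP.le (by linarith)
    have key : s ^ 2 * (4 + 4 * (p * P)) - (16 - 20 * (p * P))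
        = 4 * (P * (s ^ 3 + 9 * p - 4 * s)) := by linear_combination (16 - 4 * s ^ 2) * h3
    linarith
  have hrpos : 0 < r := by rw [hr]; positivity
  have hden : 0 < 4 * R + r := by linarith
  have h16 : 16 * R - 5 * r ≤ s ^ 2 * (4 * R + r) := by
    rw [hr]
    nlinarith [mul_le_mul_of_nonneg_left hcore hR.le]
  have harg : 3 + 4 * (R - 2 * r) / (4 * R + r) ≤ s ^ 2 := by
    have e : 3 + 4 * (R - 2 * r) / (4 * R + r) = (16 * R - 5 * r) / (4 * R + r) := by
      field_simp; ring
    rw [e, div_le_iff₀ hden]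
    linarith
  calc Real.sqrt (3 + 4 * (R - 2 * r) / (4 * R + r)) ≤ Real.sqrt (s ^ 2) :=
        Real.sqrt_le_sqrt harg
    _ = s := by rw [Real.sqrt_sq hs.le]

theorem application_seven (A B C R r : ℝ) (hA : 0 < A) (hB : 0 < B) (hC : 0 < C)
    (hsum : A + B + C = Real.pi) (hR : 0 < R)
    (hr : r = 4 * R * Real.sin (A / 2) * Real.sin (B / 2) * Real.sin (C / 2)) :
    Real.tan (A / 2) + Real.tan (B / 2) + Real.tan (C / 2)
      ≥ Real.sqrt (3 + 4 * (R - 2 * r) / (4 * R + r)) := by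
  have hpi := Real.pi_pos
  have hA2 : 0 < A / 2 := by linarith
  have hB2 : 0 < B / 2 := by linarith
  have hC2 : 0 < C / 2 := by linarith
  have hA2' : A / 2 < Real.pi / 2 := by linarith
  have hB2' : B / 2 < Real.pi / 2 := by linarith
  have hC2' : C / 2 < Real.pi / 2 := by linarith
  have hca : 0 < Real.cos (A / 2) := Real.cos_pos_of_mem_Ioo ⟨by linarith, hA2'⟩
  have hcb : 0 < Real.cos (B / 2) := Real.cos_pos_of_mem_Ioo ⟨by linarith, hB2'⟩
  have hcc : 0 < Real.cos (C / 2) := Real.cos_pos_of_mem_Ioo ⟨by linarith, hC2'⟩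
  have hsa : 0 < Real.sin (A / 2) := Real.sin_pos_of_pos_of_lt_pi hA2 (by linarith)
  have hsb : 0 < Real.sin (B / 2) := Real.sin_pos_of_pos_of_lt_pi hB2 (by linarith)
  have hsc : 0 < Real.sin (C / 2) := Real.sin_pos_of_pos_of_lt_pi hC2 (by linarith)
  set sa := Real.sin (A / 2)
  set ca := Real.cos (A / 2)
  set sb := Real.sin (B / 2)
  set cb := Real.cos (B / 2)
  set sc := Real.sin (C / 2)
  set cc := Real.cos (C / 2)
  have hC2eq : C / 2 = Real.pi / 2 - (A / 2 + B / 2) := by linarith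
  have hccue : cc = sa * cb + ca * sb := by
    show Real.cos (C/2) = _
    rw [hC2eq, Real.cos_pi_div_two_sub, Real.sin_add]
  have hscue : sc = ca * cb - sa * sb := by
    show Real.sin (C/2) = _
    rw [hC2eq, Real.sin_pi_div_two_sub, Real.cos_add]
  have hpa : sa ^ 2 + ca ^ 2 = 1 := Real.sin_sq_add_cos_sq _
  have hpb : sb ^ 2 + cb ^ 2 = 1 := Real.sin_sq_add_cos_sq _
  set u := sa / ca with hu_def
  set v := sb / cb with hv_def
  set w := sc / cc with hw_def
  have hu : 0 < u := div_pos hsa hca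
  have hv : 0 < v := div_pos hsb hcb
  have hw : 0 < w := div_pos hsc hcc
  have key1 : sa*sb*cc + sb*sc*ca + sc*sa*cb = ca*cb*cc := by
    rw [hccue, hscue]; ring
  have h1 : u * v + v * w + w * u = 1 := by
    rw [hu_def, hv_def, hw_def]
    field_simp
    linear_combination key1
  -- pair identities
  have hp1 : (u + v) * (ca * cb) = cc := by
    rw [hu_def, hv_def]
    have e : (sa/ca + sb/cb) * (ca * cb) = sa*cb + ca*sb := by field_simp
    rw [e, ← hccue]
  have hp2 : (v + w) * (cb * cc) = ca := by
    rw [hv_def, hw_def]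
    have key : sb*cc + sc*cb = ca := by rw [hccue, hscue]; linear_combination ca*hpb
    have e : (sb/cb + sc/cc) * (cb * cc) = sb*cc + sc*cb := by field_simp
    rw [e, key]
  have hp3 : (u + w) * (ca * cc) = cb := by
    rw [hu_def, hw_def]
    have key : sa*cc + sc*ca = cb := by rw [hccue, hscue]; linear_combination cb*hpa
    have e : (sa/ca + sc/cc) * (ca * cc) = sa*cc + sc*ca := by field_simp
    rw [e, key]
  set P := ca * cb * cc with hP_def
  have hP : 0 < P := by positivity
  -- (s - p) * P = 1
  have h3 : ((u + v + w) - u * v * w) * P = 1 := by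
    have e1 : ((u + v + w) - u * v * w) = (u+v)*(v+w)*(u+w) - ((u*v+v*w+w*u) - 1) * (u+v+w) := by ring
    rw [e1, h1]
    have h2' : (u+v)*(v+w)*(u+w) * (P * P) = P := by
      calc (u+v)*(v+w)*(u+w) * (P * P)
          = ((u+v)*(ca*cb)) * ((v+w)*(cb*cc)) * ((u+w)*(ca*cc)) := by rw [hP_def]; ring
        _ = cc * ca * cb := by rw [hp1, hp2, hp3]
        _ = P := by rw [hP_def]; ring
    have hXP : (u+v)*(v+w)*(u+w) * P = 1 :=
      mul_left_cancel₀ (ne_of_gt hP) (by linear_combination h2')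
    linear_combination hXP
  -- product of sines = u*v*w*P
  have h2 : sa * sb * sc = u * v * w * P := by
    rw [hu_def, hv_def, hw_def, hP_def]; field_simp
  have hr' : r = 4 * R * (u * v * w * P) := by rw [hr]; linear_combination 4 * R * h2
  have htan : Real.tan (A / 2) + Real.tan (B / 2) + Real.tan (C / 2) = u + v + w := by
    rw [Real.tan_eq_sin_div_cos, Real.tan_eq_sin_div_cos, Real.tan_eq_sin_div_cos]
  rw [htan, ge_iff_le]
  exact final_aux u v w P R r hu hv hw hP hR h1 h3 hr'
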